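/- arXiv:1704.05955 — 2 statements merged into one kernel-verified Lean document; each statement's English description precedes it below -/
import Mathlib

section
/- Euler decomposition of the qutrit Hadamard: with ω = e^{2πi/3}, G = diag(1, ω², ω²) (the green 4π/3-rotation) and R = H·G·Hᴴ (the red 4π/3-rotation), the qutrit Hadamard matrix H = (1/√3)·[[1,1,1],[1,ω,ω²],[1,ω²,ω]] satisfies H = c · G·R·G for some nonzero complex scalar c. -/
noncomputable def ω : ℂ := Complex.exp (2 * Real.pi * Complex.I / 3)

noncomputable def H : Matrix (Fin 3) (Fin 3) ℂ :=
  Matrix.of fun j k => (1 / Real.sqrt 3 : ℂ) * ω ^ (j.val * k.val)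

noncomputable def G : Matrix (Fin 3) (Fin 3) ℂ :=
  Matrix.diagonal ![1, ω ^ 2, ω ^ 2]

noncomputable def R : Matrix (Fin 3) (Fin 3) ℂ :=
  H * G * H.conjTranspose

lemma hprim : IsPrimitiveRoot ω 3 := by
  have := Complex.isPrimitiveRoot_exp 3 (by norm_num)
  convert this using 2
  simp [ω]

lemma hω3 : ω ^ 3 = 1 := hprim.pow_eq_one

lemma hsum : 1 + ω + ω ^ 2 = 0 := by
  have h1 : ω ≠ 1 := hprim.ne_one (by norm_num)
  have h : (ω - 1) * (1 + ω + ω ^ 2) = 0 := by linear_combination hω3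
  rcases mul_eq_zero.mp h with h | h
  · exact absurd (sub_eq_zero.mp h) h1
  · exact h

lemma hconj : (starRingEnd ℂ) ω = ω ^ 2 := by
  have h : (starRingEnd ℂ) ω = ω⁻¹ := by
    unfold ω
    rw [← Complex.exp_conj, ← Complex.exp_neg]
    congr 1
    simp [map_div₀, map_ofNat]
    ring
  rw [h, inv_eq_of_mul_eq_one_left (by linear_combination hω3 : ω ^ 2 * ω = 1)]

lemma him : ω.im = Real.sqrt 3 / 2 := by
  unfold ω
  rw [show (2 * Real.pi * Complex.I / 3 : ℂ) = ((2 * Real.pi / 3 : ℝ) : ℂ) * Complex.I by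
    push_cast; ring]
  rw [Complex.exp_ofReal_mul_I_im]
  rw [show (2 * Real.pi / 3 : ℝ) = Real.pi - Real.pi / 3 by ring, Real.sin_pi_sub,
    Real.sin_pi_div_three]

lemma hIs : Complex.I * (Real.sqrt 3 : ℂ) = ω - ω ^ 2 := by
  rw [← hconj, Complex.sub_conj, him]
  push_cast
  ring

set_option maxHeartbeats 2000000 in
theorem euler_decomposition : ∃ c : ℂ, c ≠ 0 ∧ H = c • (G * R * G) := by
  refine ⟨Complex.I, Complex.I_ne_zero, ?_⟩
  have hsne : ((Real.sqrt 3 : ℝ) : ℂ) ≠ 0 := by norm_cast; positivity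
  have hs2 : ((Real.sqrt 3 : ℝ) : ℂ) ^ 2 = 3 := by
    norm_cast; rw [Real.sq_sqrt] <;> norm_num
  have hI : Complex.I = (ω - ω ^ 2) / ((Real.sqrt 3 : ℝ) : ℂ) := by
    rw [← hIs]; field_simp
  ext j k
  fin_cases j <;> fin_cases k
  · simp [H, G, R, Matrix.mul_apply, Fin.sum_univ_three, Matrix.conjTranspose_apply,
      Matrix.diagonal, map_mul, map_pow, Complex.conj_ofReal, hconj]
    rw [hI]
    field_simp
    linear_combination hs2 + ((3 : ℂ) * 1 + (-4 : ℂ) * ω + (2 : ℂ) * ω ^ 2) * hsum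
  · simp [H, G, R, Matrix.mul_apply, Fin.sum_univ_three, Matrix.conjTranspose_apply,
      Matrix.diagonal, map_mul, map_pow, Complex.conj_ofReal, hconj]
    rw [hI]
    field_simp
    linear_combination hs2 + ((3 : ℂ) * 1 + (-3 : ℂ) * ω + (2 : ℂ) * ω ^ 3 + (-1 : ℂ) * ω ^ 4 + (-1 : ℂ) * ω ^ 5 + (2 : ℂ) * ω ^ 6 + (-2 : ℂ) * ω ^ 7 + (1 : ℂ) * ω ^ 8) * hsum
  · simp [H, G, R, Matrix.mul_apply, Fin.sum_univ_three, Matrix.conjTranspose_apply,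
      Matrix.diagonal, map_mul, map_pow, Complex.conj_ofReal, hconj]
    rw [hI]
    field_simp
    linear_combination hs2 + ((3 : ℂ) * 1 + (-3 : ℂ) * ω + (2 : ℂ) * ω ^ 3 + (-1 : ℂ) * ω ^ 4 + (-1 : ℂ) * ω ^ 5 + (2 : ℂ) * ω ^ 6 + (-1 : ℂ) * ω ^ 7 + (-1 : ℂ) * ω ^ 8 + (1 : ℂ) * ω ^ 9 + (1 : ℂ) * ω ^ 10 + (-2 : ℂ) * ω ^ 11 + (1 : ℂ) * ω ^ 12) * hsum
  · simp [H, G, R, Matrix.mul_apply, Fin.sum_univ_three, Matrix.conjTranspose_apply,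
      Matrix.diagonal, map_mul, map_pow, Complex.conj_ofReal, hconj]
    rw [hI]
    field_simp
    linear_combination hs2 + ((3 : ℂ) * 1 + (-3 : ℂ) * ω + (2 : ℂ) * ω ^ 3 + (-1 : ℂ) * ω ^ 4 + (-1 : ℂ) * ω ^ 5 + (1 : ℂ) * ω ^ 6) * hsum
  · simp [H, G, R, Matrix.mul_apply, Fin.sum_univ_three, Matrix.conjTranspose_apply,
      Matrix.diagonal, map_mul, map_pow, Complex.conj_ofReal, hconj]
    rw [hI]
    field_simp
    linear_combination (ω * ((Real.sqrt 3 : ℝ) : ℂ)) * hs2 + (((3 : ℂ) * ω + (-3 : ℂ) * ω ^ 2 + (3 : ℂ) * ω ^ 4 + (-4 : ℂ) * ω ^ 5 + (2 : ℂ) * ω ^ 6 + (2 : ℂ) * ω ^ 7 + (-4 : ℂ) * ω ^ 8 + (2 : ℂ) * ω ^ 9 + (1 : ℂ) * ω ^ 10 + (-2 : ℂ) * ω ^ 11 + (1 : ℂ) * ω ^ 12) * ((Real.sqrt 3 : ℝ) : ℂ)) * hsum + ((1 : ℂ) * ω + (-1 : ℂ) * ((Real.sqrt 3 : ℝ) :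 ℂ) * ω) * hs2 + ((3 : ℂ) * ω + (-3 : ℂ) * ω ^ 2 + (3 : ℂ) * ω ^ 4 + (-4 : ℂ) * ω ^ 5 + (2 : ℂ) * ω ^ 6 + (2 : ℂ) * ω ^ 7 + (-4 : ℂ) * ω ^ 8 + (2 : ℂ) * ω ^ 9 + (1 : ℂ) * ω ^ 10 + (-2 : ℂ) * ω ^ 11 + (1 : ℂ) * ω ^ 12 + (-3 : ℂ) * ((Real.sqrt 3 : ℝ) : ℂ) * ω + (3 : ℂ) * ((Real.sqrt 3 : ℝ) : ℂ) * ω ^ 2 + (-3 : ℂ) * ((Real.sqrt 3 : ℝ) : ℂ) * ω ^ 4 + (4 : ℂ) * ((Real.sqrt 3 : ℝ) : ℂ) * ω ^ 5 + (-2 : ℂ) * ((Real.sqrt 3 : ℝ) : ℂ) * ω ^ 6 + (-2 : ℂ) * ((Real.sqrt 3 : ℝ) : ℂ) * ω ^ 7 + (4 : ℂ) * ((Real.sqrt 3 : ℝ) : ℂ) * ω ^ 8 + (-2 : ℂ) * ((Real.sqrt 3 : ℝ) : ℂ) * ω ^ 9 + (-1 : ℂ) * ((Real.sqrt 3 : ℝ)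 : ℂ) * ω ^ 10 + (2 : ℂ) * ((Real.sqrt 3 : ℝ) : ℂ) * ω ^ 11 + (-1 : ℂ) * ((Real.sqrt 3 : ℝ) : ℂ) * ω ^ 12) * hsum
  · simp [H, G, R, Matrix.mul_apply, Fin.sum_univ_three, Matrix.conjTranspose_apply,
      Matrix.diagonal, map_mul, map_pow, Complex.conj_ofReal, hconj]
    rw [hI]
    field_simp
    linear_combination (ω ^ 2 * ((Real.sqrt 3 : ℝ) : ℂ)) * hs2 + (((3 : ℂ) * ω ^ 2 + (-3 : ℂ) * ω ^ 3 + (2 : ℂ) * ω ^ 5 + (-1 : ℂ) * ω ^ 6 + (-1 : ℂ) * ω ^ 7 + (2 : ℂ) * ω ^ 8 + (-1 : ℂ) * ω ^ 9 + (-1 : ℂ) * ω ^ 10 + (2 : ℂ) * ω ^ 11 + (-2 : ℂ) * ω ^ 12 + (1 : ℂ) * ω ^ 13 + (1 : ℂ) * ω ^ 14 + (-2 : ℂ) * ω ^ 15 + (1 : ℂ) * ω ^ 16) * ((Real.sqrt 3 : ℝ) : ℂ)) * hsum + ((1 : ℂ) * ω ^ 2 + (-1 : ℂ) * ((Real.sqrt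 3 : ℝ) : ℂ) * ω ^ 2) * hs2 + ((3 : ℂ) * ω ^ 2 + (-3 : ℂ) * ω ^ 3 + (2 : ℂ) * ω ^ 5 + (-1 : ℂ) * ω ^ 6 + (-1 : ℂ) * ω ^ 7 + (2 : ℂ) * ω ^ 8 + (-1 : ℂ) * ω ^ 9 + (-1 : ℂ) * ω ^ 10 + (2 : ℂ) * ω ^ 11 + (-2 : ℂ) * ω ^ 12 + (1 : ℂ) * ω ^ 13 + (1 : ℂ) * ω ^ 14 + (-2 : ℂ) * ω ^ 15 + (1 : ℂ) * ω ^ 16 + (-3 : ℂ) * ((Real.sqrt 3 : ℝ) : ℂ) * ω ^ 2 + (3 : ℂ) * ((Real.sqrt 3 : ℝ) : ℂ) * ω ^ 3 + (-2 : ℂ) * ((Real.sqrt 3 : ℝ) : ℂ) * ω ^ 5 + (1 : ℂ) * ((Real.sqrt 3 : ℝ) : ℂ) * ω ^ 6 + (1 : ℂ) * ((Real.sqrt 3 : ℝ) : ℂ) * ω ^ 7 + (-2 : ℂ) * ((Real.sqrt 3 : ℝ) : ℂ) * ω ^ 8 + (1 : ℂ) * ((Real.sqrt 3 : ℝ) :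 ℂ) * ω ^ 9 + (1 : ℂ) * ((Real.sqrt 3 : ℝ) : ℂ) * ω ^ 10 + (-2 : ℂ) * ((Real.sqrt 3 : ℝ) : ℂ) * ω ^ 11 + (2 : ℂ) * ((Real.sqrt 3 : ℝ) : ℂ) * ω ^ 12 + (-1 : ℂ) * ((Real.sqrt 3 : ℝ) : ℂ) * ω ^ 13 + (-1 : ℂ) * ((Real.sqrt 3 : ℝ) : ℂ) * ω ^ 14 + (2 : ℂ) * ((Real.sqrt 3 : ℝ) : ℂ) * ω ^ 15 + (-1 : ℂ) * ((Real.sqrt 3 : ℝ) : ℂ) * ω ^ 16) * hsum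
  · simp [H, G, R, Matrix.mul_apply, Fin.sum_univ_three, Matrix.conjTranspose_apply,
      Matrix.diagonal, map_mul, map_pow, Complex.conj_ofReal, hconj]
    rw [hI]
    field_simp
    linear_combination hs2 + ((3 : ℂ) * 1 + (-3 : ℂ) * ω + (2 : ℂ) * ω ^ 3 + (-1 : ℂ) * ω ^ 4 + (-1 : ℂ) * ω ^ 5 + (2 : ℂ) * ω ^ 6 + (-2 : ℂ) * ω ^ 7 + (1 : ℂ) * ω ^ 8) * hsum
  · simp [H, G, R, Matrix.mul_apply, Fin.sum_univ_three, Matrix.conjTranspose_apply,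
      Matrix.diagonal, map_mul, map_pow, Complex.conj_ofReal, hconj]
    rw [hI]
    field_simp
    linear_combination (ω ^ 2 * ((Real.sqrt 3 : ℝ) : ℂ)) * hs2 + (((3 : ℂ) * ω ^ 2 + (-3 : ℂ) * ω ^ 3 + (2 : ℂ) * ω ^ 5 + (-1 : ℂ) * ω ^ 6 + (-1 : ℂ) * ω ^ 7 + (2 : ℂ) * ω ^ 8 + (-1 : ℂ) * ω ^ 9 + (-1 : ℂ) * ω ^ 10 + (1 : ℂ) * ω ^ 11 + (1 : ℂ) * ω ^ 12 + (-2 : ℂ) * ω ^ 13 + (1 : ℂ) * ω ^ 14) * ((Real.sqrt 3 : ℝ) : ℂ)) * hsum + ((1 : ℂ) * ω ^ 2 + (-1 : ℂ) * ((Real.sqrt 3 : ℝ) : ℂ) * ω ^ 2) * hs2 + ((3 : ℂ) * ω ^ 2 + (-3 : ℂ) * ω ^ 3 + (2 : ℂ) * ω ^ 5 + (-1 : ℂ) * ω ^ 6 + (-1 : ℂ) * ω ^ 7 + (2 : ℂ) * ω ^ 8 + (-1 : ℂ) * ω ^ 9 + (-1 : ℂ) * ω ^ 10 + (1 : ℂ)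 * ω ^ 11 + (1 : ℂ) * ω ^ 12 + (-2 : ℂ) * ω ^ 13 + (1 : ℂ) * ω ^ 14 + (-3 : ℂ) * ((Real.sqrt 3 : ℝ) : ℂ) * ω ^ 2 + (3 : ℂ) * ((Real.sqrt 3 : ℝ) : ℂ) * ω ^ 3 + (-2 : ℂ) * ((Real.sqrt 3 : ℝ) : ℂ) * ω ^ 5 + (1 : ℂ) * ((Real.sqrt 3 : ℝ) : ℂ) * ω ^ 6 + (1 : ℂ) * ((Real.sqrt 3 : ℝ) : ℂ) * ω ^ 7 + (-2 : ℂ) * ((Real.sqrt 3 : ℝ) : ℂ) * ω ^ 8 + (1 : ℂ) * ((Real.sqrt 3 : ℝ) : ℂ) * ω ^ 9 + (1 : ℂ) * ((Real.sqrt 3 : ℝ) : ℂ) * ω ^ 10 + (-1 : ℂ) * ((Real.sqrt 3 : ℝ) : ℂ) * ω ^ 11 + (-1 : ℂ) * ((Real.sqrt 3 : ℝ) : ℂ) * ω ^ 12 + (2 : ℂ) * ((Real.sqrt 3 : ℝ) : ℂ) * ω ^ 13 + (-1 : ℂ) * ((Real.sqrt 3 : ℝ) : ℂ) * ω ^ 14)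 * hsum
  · simp [H, G, R, Matrix.mul_apply, Fin.sum_univ_three, Matrix.conjTranspose_apply,
      Matrix.diagonal, map_mul, map_pow, Complex.conj_ofReal, hconj]
    rw [hI]
    field_simp
    linear_combination (ω ^ 4 * ((Real.sqrt 3 : ℝ) : ℂ)) * hs2 + (((3 : ℂ) * ω ^ 4 + (-4 : ℂ) * ω ^ 5 + (2 : ℂ) * ω ^ 6 + (2 : ℂ) * ω ^ 7 + (-4 : ℂ) * ω ^ 8 + (2 : ℂ) * ω ^ 9 + (2 : ℂ) * ω ^ 10 + (-4 : ℂ) * ω ^ 11 + (2 : ℂ) * ω ^ 12 + (1 : ℂ) * ω ^ 13 + (-2 : ℂ) * ω ^ 14 + (1 : ℂ) * ω ^ 15 + (1 : ℂ) * ω ^ 16 + (-2 : ℂ) * ω ^ 17 + (1 : ℂ) * ω ^ 18) * ((Real.sqrt 3 : ℝ) : ℂ)) * hsum + ((1 : ℂ) * ω ^ 4 + (-1 : ℂ) * ((Real.sqrt 3 : ℝ) : ℂ) * ω ^ 4) * hs2 + ((3 : ℂ) * ω ^ 4 + (-4 : ℂ) * ω ^ 5 + (2 : ℂ) * ω ^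 6 + (2 : ℂ) * ω ^ 7 + (-4 : ℂ) * ω ^ 8 + (2 : ℂ) * ω ^ 9 + (2 : ℂ) * ω ^ 10 + (-4 : ℂ) * ω ^ 11 + (2 : ℂ) * ω ^ 12 + (1 : ℂ) * ω ^ 13 + (-2 : ℂ) * ω ^ 14 + (1 : ℂ) * ω ^ 15 + (1 : ℂ) * ω ^ 16 + (-2 : ℂ) * ω ^ 17 + (1 : ℂ) * ω ^ 18 + (-3 : ℂ) * ((Real.sqrt 3 : ℝ) : ℂ) * ω ^ 4 + (4 : ℂ) * ((Real.sqrt 3 : ℝ) : ℂ) * ω ^ 5 + (-2 : ℂ) * ((Real.sqrt 3 : ℝ) : ℂ) * ω ^ 6 + (-2 : ℂ) * ((Real.sqrt 3 : ℝ) : ℂ) * ω ^ 7 + (4 : ℂ) * ((Real.sqrt 3 : ℝ) : ℂ) * ω ^ 8 + (-2 : ℂ) * ((Real.sqrt 3 : ℝ) : ℂ) * ω ^ 9 + (-2 : ℂ) * ((Real.sqrt 3 : ℝ) : ℂ) * ω ^ 10 + (4 : ℂ) * ((Real.sqrt 3 : ℝ) : ℂ) * ω ^ 11 + (-2 : ℂ)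 * ((Real.sqrt 3 : ℝ) : ℂ) * ω ^ 12 + (-1 : ℂ) * ((Real.sqrt 3 : ℝ) : ℂ) * ω ^ 13 + (2 : ℂ) * ((Real.sqrt 3 : ℝ) : ℂ) * ω ^ 14 + (-1 : ℂ) * ((Real.sqrt 3 : ℝ) : ℂ) * ω ^ 15 + (-1 : ℂ) * ((Real.sqrt 3 : ℝ) : ℂ) * ω ^ 16 + (2 : ℂ) * ((Real.sqrt 3 : ℝ) : ℂ) * ω ^ 17 + (-1 : ℂ) * ((Real.sqrt 3 : ℝ) : ℂ) * ω ^ 18) * hsum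
end

section
/- With ω = e^{2πi/3}, G = diag(1, ω², ω²), R = H·G·Hᴴ and H the qutrit Hadamard, the inverse Hᴴ satisfies Hᴴ = c · Gᴴ·Rᴴ·Gᴴ for some nonzero complex scalar c (Euler decomposition of H†). -/
lemma hω : ω = (-1 + Real.sqrt 3 * Complex.I) / 2 := by
  have h : (2 * Real.pi * Complex.I / 3 : ℂ) = (2 * Real.pi / 3 : ℝ) * Complex.I := by
    push_cast; ring
  rw [ω, h, Complex.exp_mul_I, ← Complex.ofReal_cos, ← Complex.ofReal_sin]
  have hc : Real.cos (2 * Real.pi / 3) = -(1 / 2) := by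
    have h' : (2 * Real.pi / 3) = Real.pi - Real.pi / 3 := by ring
    rw [h', Real.cos_pi_sub, Real.cos_pi_div_three]
  have hs : Real.sin (2 * Real.pi / 3) = Real.sqrt 3 / 2 := by
    have h' : (2 * Real.pi / 3) = Real.pi - Real.pi / 3 := by ring
    rw [h', Real.sin_pi_sub, Real.sin_pi_div_three]
  rw [hc, hs]; push_cast; ring

lemma h3 : ((Real.sqrt 3 : ℝ) : ℂ) ^ 2 = 3 := by
  norm_cast; rw [Real.sq_sqrt]; norm_num

lemma hsI : ((Real.sqrt 3 : ℝ) : ℂ) * Complex.I = 1 + 2 * ω := by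
  rw [hω]; ring

lemma hω2 : ω ^ 2 = (-1 - Real.sqrt 3 * Complex.I) / 2 := by
  rw [hω]
  linear_combination (Complex.I ^ 2 / 4) * h3 + (3 / 4) * Complex.I_sq

lemma hstar : starRingEnd ℂ ω = ω ^ 2 := by
  rw [hω2, hω, map_div₀, map_add, map_neg, map_one, map_mul, Complex.conj_I,
    Complex.conj_ofReal, map_ofNat]
  ring

theorem euler_decomposition_dagger :
    ∃ c : ℂ, c ≠ 0 ∧
      H.conjTranspose = c • (G.conjTranspose * R.conjTranspose * G.conjTranspose) := by
  have h3ne : ((Real.sqrt 3 : ℝ) : ℂ) ≠ 0 := by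
    simp [Real.sqrt_ne_zero'.mpr (by norm_num : (0:ℝ) < 3)]
  refine ⟨-Complex.I, by simp, ?_⟩
  ext i j
  fin_cases i <;> fin_cases j <;>
    (simp [H, G, R, Matrix.mul_apply, Fin.sum_univ_three, Matrix.conjTranspose_apply,
      Matrix.diagonal, smul_eq_mul, hstar, map_pow, Complex.conj_ofReal, map_div₀, map_ofNat];
     field_simp)
  · linear_combination (2 * ω * Complex.I) * hω3 + (-1 * Complex.I) * hsI + (0) * h3 + (((Real.sqrt 3 : ℝ) : ℂ)) * Complex.I_sq
  · linear_combination (Complex.I + 2 * ω * Complex.I + ω^3 * Complex.I + ω^4 * Complex.I + ω^6 * Complex.I + ω^7 * Complex.I + ω^9 * Complex.I) * hω3 + (-1 * Complex.I) * hsI + (0) * h3 + (((Real.sqrt 3 : ℝ) : ℂ)) * Complex.I_sq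
  · linear_combination (Complex.I + 2 * ω * Complex.I + ω^3 * Complex.I + ω^4 * Complex.I + ω^6 * Complex.I + ω^7 * Complex.I + ω^9 * Complex.I + ω^10 * Complex.I + ω^13 * Complex.I) * hω3 + (-1 * Complex.I) * hsI + (0) * h3 + (((Real.sqrt 3 : ℝ) : ℂ)) * Complex.I_sq
  · linear_combination (Complex.I + 2 * ω * Complex.I + ω^3 * Complex.I + ω^4 * Complex.I + ω^6 * Complex.I + ω^7 * Complex.I) * hω3 + (-1 * Complex.I) * hsI + (0) * h3 + (((Real.sqrt 3 : ℝ) : ℂ)) * Complex.I_sq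
  · linear_combination ((1/1:ℂ)*ω^5*Complex.I^1 + (2/1:ℂ)*ω^12*Complex.I^1 + (1/1:ℂ)*ω^15*Complex.I^1 + (1/1:ℂ)*ω^2*Complex.I^1 + (2/1:ℂ)*ω^9*Complex.I^1 + (2/1:ℂ)*ω^6*Complex.I^1 + (2/1:ℂ)*ω^3*Complex.I^1 + (2/1:ℂ)*Complex.I^1) * hω3 + ((-1/2:ℂ)*((Real.sqrt 3 : ℝ) : ℂ)^1 + (1/2:ℂ)*((Real.sqrt 3 : ℝ) : ℂ)^2*Complex.I^1 + (1/1:ℂ)*ω^1*((Real.sqrt 3 : ℝ) : ℂ)^1 + (-1/2:ℂ)*Complex.I^1 + (1/2:ℂ)*((Real.sqrt 3 : ℝ) : ℂ)^1*Complex.I^2 + (1/1:ℂ)*ω^1*Complex.I^1) * hω + ((1/4:ℂ)*((Real.sqrt 3 : ℝ) : ℂ)^3 + (-1/2:ℂ)*((Real.sqrt 3 : ℝ) : ℂ)^1 + (1/4:ℂ)*((Real.sqrt 3 : ℝ) : ℂ)^2*Complex.I^1) * Complex.I_sq + ((-3/4:ℂ)*Complex.I^1 + (-1/4:ℂ)*((Real.sqrt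 3 : ℝ) : ℂ)^1) * h3
  · linear_combination ((1/1:ℂ)*ω^1*((Real.sqrt 3 : ℝ) : ℂ)^1 + (2/1:ℂ)*ω^5*Complex.I^1 + (1/1:ℂ)*ω^14*Complex.I^1 + (1/1:ℂ)*ω^19*Complex.I^1 + (2/1:ℂ)*ω^2*Complex.I^1 + (1/1:ℂ)*ω^11*Complex.I^1 + (1/1:ℂ)*ω^16*Complex.I^1 + (1/1:ℂ)*ω^8*Complex.I^1 + (1/1:ℂ)*ω^13*Complex.I^1 + (1/1:ℂ)*ω^10*Complex.I^1 + (1/1:ℂ)*ω^7*Complex.I^1 + (1/1:ℂ)*ω^4*Complex.I^1 + (1/1:ℂ)*ω^1*Complex.I^1) * hω3 + ((1/1:ℂ)*((Real.sqrt 3 : ℝ) : ℂ)^1 + (1/1:ℂ)*((Real.sqrt 3 : ℝ) : ℂ)^1*Complex.I^2 + (2/1:ℂ)*ω^1*Complex.I^1) * hω + ((-1/2:ℂ)*((Real.sqrt 3 : ℝ) : ℂ)^1 + (1/2:ℂ)*((Real.sqrt 3 : ℝ) : ℂ)^2*Complex.I^1) * Complex.I_sq + 0 * h3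
  · linear_combination (Complex.I + 2 * ω * Complex.I + ω^3 * Complex.I + ω^4 * Complex.I + ω^6 * Complex.I + ω^7 * Complex.I + ω^9 * Complex.I) * hω3 + (-1 * Complex.I) * hsI + (0) * h3 + (((Real.sqrt 3 : ℝ) : ℂ)) * Complex.I_sq
  · linear_combination ((1/1:ℂ)*ω^1*((Real.sqrt 3 : ℝ) : ℂ)^1 + (2/1:ℂ)*ω^5*Complex.I^1 + (1/1:ℂ)*ω^13*Complex.I^1 + (1/1:ℂ)*ω^17*Complex.I^1 + (2/1:ℂ)*ω^2*Complex.I^1 + (1/1:ℂ)*ω^10*Complex.I^1 + (1/1:ℂ)*ω^14*Complex.I^1 + (1/1:ℂ)*ω^7*Complex.I^1 + (1/1:ℂ)*ω^11*Complex.I^1 + (1/1:ℂ)*ω^4*Complex.I^1 + (1/1:ℂ)*ω^8*Complex.I^1 + (1/1:ℂ)*ω^1*Complex.I^1) * hω3 + ((1/1:ℂ)*((Real.sqrt 3 : ℝ) : ℂ)^1 + (1/1:ℂ)*((Real.sqrt 3 : ℝ) : ℂ)^1*Complex.I^2 + (2/1:ℂ)*ω^1*Complex.I^1) * hω + ((-1/2:ℂ)*((Real.sqrt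 3 : ℝ) : ℂ)^1 + (1/2:ℂ)*((Real.sqrt 3 : ℝ) : ℂ)^2*Complex.I^1) * Complex.I_sq + 0 * h3
  · linear_combination ((1/1:ℂ)*ω^5*((Real.sqrt 3 : ℝ) : ℂ)^1 + (1/1:ℂ)*ω^5*Complex.I^1 + (2/1:ℂ)*ω^15*Complex.I^1 + (1/1:ℂ)*ω^21*Complex.I^1 + (1/1:ℂ)*ω^2*((Real.sqrt 3 : ℝ) : ℂ)^1 + (1/1:ℂ)*ω^2*Complex.I^1 + (2/1:ℂ)*ω^12*Complex.I^1 + (1/1:ℂ)*ω^18*Complex.I^1 + (2/1:ℂ)*ω^9*Complex.I^1 + (2/1:ℂ)*ω^6*Complex.I^1 + (2/1:ℂ)*ω^3*Complex.I^1 + (2/1:ℂ)*Complex.I^1) * hω3 + ((-1/2:ℂ)*((Real.sqrt 3 : ℝ) : ℂ)^1 + (1/2:ℂ)*((Real.sqrt 3 : ℝ) : ℂ)^2*Complex.I^1 + (1/1:ℂ)*ω^1*((Real.sqrt 3 : ℝ) : ℂ)^1 + (-1/2:ℂ)*Complex.I^1 + (1/2:ℂ)*((Real.sqrt 3 : ℝ)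 : ℂ)^1*Complex.I^2 + (1/1:ℂ)*ω^1*Complex.I^1) * hω + ((1/4:ℂ)*((Real.sqrt 3 : ℝ) : ℂ)^3 + (-1/2:ℂ)*((Real.sqrt 3 : ℝ) : ℂ)^1 + (1/4:ℂ)*((Real.sqrt 3 : ℝ) : ℂ)^2*Complex.I^1) * Complex.I_sq + ((-3/4:ℂ)*Complex.I^1 + (-1/4:ℂ)*((Real.sqrt 3 : ℝ) : ℂ)^1) * h3
end
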